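/- Let m ≥ 2 and let C be a Z_{2^m}-code of length n having a generator matrix in standard form of type (k_1,…,k_m); set K = k_1+⋯+k_m. Then for every vector w ∈ (Z/2^m)^n all of whose coordinates lie in {0, 2^{m−1}}, there exists a unique codeword c ∈ C all of whose coordinates lie in {0, 2^{m−1}} such that c_i = w_i for all i ∈ {1,…,K}. -/

import Mathlib

open Finset

/-- Inner product of two vectors over `ZMod N`. -/
def innerZ {N n : ℕ} (x y : Fin n → ZMod N) : ZMod N := ∑ i, x i * y i

/-- Euclidean weight of a vector over `ZMod N`. -/
def euclWt {N n : ℕ} (x : Fin n → ZMod N) : ℕ :=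
  ∑ i, min ((x i).val ^ 2) ((N - (x i).val) ^ 2)

/-- Number of coordinates of `x` equal to `a`. -/
def cntEq {N n : ℕ} (a : ZMod N) (x : Fin n → ZMod N) : ℕ :=
  (Finset.univ.filter fun j => x j = a).card

/-- A code is self-dual if it equals its dual. -/
def IsSelfDual {N n : ℕ} (C : AddSubgroup (Fin n → ZMod N)) : Prop :=
  ∀ x, x ∈ C ↔ ∀ y ∈ C, innerZ x y = 0

/-- The subcode `{v ∈ C : ⟨w, v⟩ = 0}`. -/
def evenPart {N n : ℕ} (C : AddSubgroup (Fin n → ZMod N)) (w : Fin n → ZMod N) :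
    AddSubgroup (Fin n → ZMod N) where
  carrier := {v | v ∈ C ∧ innerZ w v = 0}
  zero_mem' := ⟨C.zero_mem, by simp [innerZ]⟩
  add_mem' := by
    rintro a b ⟨ha, ha0⟩ ⟨hb, hb0⟩
    refine ⟨C.add_mem ha hb, ?_⟩
    have h : innerZ w (a + b) = innerZ w a + innerZ w b := by
      simp [innerZ, mul_add, Finset.sum_add_distrib]
    rw [h, ha0, hb0, add_zero]
  neg_mem' := by
    rintro a ⟨ha, ha0⟩
    refine ⟨C.neg_mem ha, ?_⟩
    have h : innerZ w (-a) = - innerZ w a := by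
      simp [innerZ]
    rw [h, ha0, neg_zero]

/-- `kv` extended to all of `ℕ` by zero. -/
def extk {m : ℕ} (kv : Fin m → ℕ) : ℕ → ℕ := fun t => if h : t < m then kv ⟨t, h⟩ else 0

/-- Partial sums `k_1 + ⋯ + k_j`. -/
def psum {m : ℕ} (kv : Fin m → ℕ) (j : ℕ) : ℕ := ∑ t ∈ Finset.range j, extk kv t

/-- `G` is a generator matrix in standard form of type `(k_1, …, k_m)`. -/
def StandardForm {N : ℕ} {m n : ℕ} (kv : Fin m → ℕ)
    (G : Fin (psum kv m) → Fin n → ZMod N) : Prop :=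
  psum kv m ≤ n ∧
  ∀ (j : Fin m) (r : Fin (psum kv m)), psum kv (j : ℕ) ≤ (r : ℕ) → (r : ℕ) < psum kv ((j : ℕ) + 1) →
    ∀ c : Fin n,
      (∀ l : Fin m, psum kv (l : ℕ) ≤ (c : ℕ) → (c : ℕ) < psum kv ((l : ℕ) + 1) →
        (l < j → G r c = 0) ∧
        (l = j → G r c = if (r : ℕ) = (c : ℕ) then (2 ^ (j : ℕ) : ZMod N) else 0)) ∧
      ((psum kv m ≤ (c : ℕ) ∨
        ∃ l : Fin m, j < l ∧ psum kv (l : ℕ) ≤ (c : ℕ) ∧ (c : ℕ) < psum kv ((l : ℕ) + 1)) →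
        ∃ a : ZMod N, G r c = 2 ^ (j : ℕ) * a)

/-- The minimum Euclidean weight over nonzero codewords equals `d`. -/
def minEuclWtIs {N n : ℕ} (C : AddSubgroup (Fin n → ZMod N)) (d : ℕ) : Prop :=
  (∀ x ∈ C, x ≠ 0 → d ≤ euclWt x) ∧ ∃ x ∈ C, x ≠ 0 ∧ euclWt x = d

/-- Coordinatewise reduction modulo 4. -/
def res4 {n : ℕ} : (Fin n → ZMod 8) →+ (Fin n → ZMod 4) where
  toFun := fun x i => ZMod.castHom (by norm_num : (4 : ℕ) ∣ 8) (ZMod 4) (x i)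
  map_zero' := by ext i; simp
  map_add' := by intro a b; ext i; exact map_add (ZMod.castHom (by norm_num) _) _ _

/-- Coordinatewise reduction modulo 2. -/
def res2 {n : ℕ} : (Fin n → ZMod 8) →+ (Fin n → ZMod 2) where
  toFun := fun x i => ZMod.castHom (by norm_num : (2 : ℕ) ∣ 8) (ZMod 2) (x i)
  map_zero' := by ext i; simp
  map_add' := by intro a b; ext i; exact map_add (ZMod.castHom (by norm_num) _) _ _

/-- Hamming weight of a binary vector. -/
def hammingWt {n : ℕ} (y : Fin n → ZMod 2) : ℕ :=
  (Finset.univ.filter fun i => y i ≠ 0).card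

/-- Equivalence of codes: a permutation of coordinates combined with sign changes. -/
def codeEquiv {N n : ℕ} (C C' : AddSubgroup (Fin n → ZMod N)) : Prop :=
  ∃ (σ : Equiv.Perm (Fin n)) (ε : Fin n → ZMod N),
    (∀ i, ε i = 1 ∨ ε i = -1) ∧
    ∀ y, y ∈ C' ↔ ∃ x ∈ C, y = fun i => ε i * x (σ i)


lemma psum_mono {m : ℕ} (kv : Fin m → ℕ) : Monotone (psum kv) :=
  fun _ _ hab => Finset.sum_le_sum_of_subset (Finset.range_subset_range.mpr hab)

lemma psum_block {m : ℕ} (hm : 1 ≤ m) (kv : Fin m → ℕ) (t : ℕ) (ht : t < psum kv m) :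
    ∃ j : Fin m, psum kv j ≤ t ∧ t < psum kv (j + 1) := by
  have hex : ∃ j, t < psum kv (j + 1) := ⟨m - 1, by rwa [Nat.sub_add_cancel hm]⟩
  have hj2 := Nat.find_spec hex
  have hjm : Nat.find hex ≤ m - 1 := Nat.find_min' hex (by rwa [Nat.sub_add_cancel hm])
  refine ⟨⟨Nat.find hex, by omega⟩, ?_, hj2⟩
  rcases Nat.eq_zero_or_pos (Nat.find hex) with h0 | h0
  · show psum kv (Nat.find hex) ≤ t
    rw [h0]; simp [psum]
  · have := Nat.find_min hex (m := Nat.find hex - 1) (by omega)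
    have heq : Nat.find hex - 1 + 1 = Nat.find hex := by omega
    rw [heq] at this
    show psum kv (Nat.find hex) ≤ t
    omega

lemma two_mul_eq_zero_iff {m : ℕ} (hm : 1 ≤ m) (x : ZMod (2 ^ m)) :
    2 * x = 0 ↔ x = 0 ∨ x = 2 ^ (m - 1) := by
  haveI : NeZero (2 ^ m) := ⟨by positivity⟩
  have hcast : ((2 ^ (m - 1) : ℕ) : ZMod (2 ^ m)) = (2 : ZMod (2^m)) ^ (m - 1) := by push_cast; ring
  constructor
  · intro h
    have hx : ((x.val : ℕ) : ZMod (2 ^ m)) = x := ZMod.natCast_zmod_val x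
    have h2 : ((2 * x.val : ℕ) : ZMod (2 ^ m)) = 0 := by push_cast [hx]; exact h
    rw [ZMod.natCast_eq_zero_iff] at h2
    have hsplit : 2 ^ m = 2 * 2 ^ (m - 1) := by
      rw [← pow_succ']; congr 1; omega
    have h2' : 2 * 2 ^ (m - 1) ∣ 2 * x.val := by rw [← hsplit]; exact h2
    have hdvd : 2 ^ (m - 1) ∣ x.val := (mul_dvd_mul_iff_left (by norm_num : (2:ℕ) ≠ 0)).mp h2'
    have hlt : x.val < 2 ^ m := ZMod.val_lt x
    obtain ⟨k, hk⟩ := hdvd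
    have hk2 : k < 2 := by
      by_contra hk2
      push_neg at hk2
      have : 2 * 2 ^ (m-1) ≤ 2 ^ (m-1) * k := by nlinarith [Nat.pow_pos (n := m-1) (by norm_num : 0 < 2)]
      omega
    interval_cases k
    · left; rw [← hx, hk]; simp
    · right; rw [← hx, hk]; simp [hcast]
  · rintro (rfl | rfl)
    · ring
    · have h1 : (2 : ZMod (2^m)) * 2 ^ (m - 1) = 2 ^ m := by rw [← pow_succ']; congr 1; omega
      rw [h1]
      have h0 : ((2 ^ m : ℕ) : ZMod (2 ^ m)) = 0 := ZMod.natCast_self _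
      push_cast at h0; exact h0

lemma pow_m1_ne_zero {m : ℕ} (hm : 1 ≤ m) : ((2 : ZMod (2^m)) ^ (m - 1)) ≠ 0 := by
  have hcast : ((2 ^ (m - 1) : ℕ) : ZMod (2 ^ m)) = (2 : ZMod (2^m)) ^ (m - 1) := by push_cast; ring
  rw [← hcast, Ne, ZMod.natCast_eq_zero_iff]
  intro h
  have := Nat.le_of_dvd (by positivity) h
  have := Nat.pow_lt_pow_right (a := 2) (by norm_num) (show m - 1 < m by omega)
  omega

lemma pow_m_eq_zero {m : ℕ} : ((2 : ZMod (2^m)) ^ m) = 0 := by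
  have h0 : ((2 ^ m : ℕ) : ZMod (2 ^ m)) = 0 := ZMod.natCast_self _
  push_cast at h0; exact h0

def rowspanHom {N n K : ℕ} (G : Fin K → Fin n → ZMod N) :
    (Fin K → ZMod N) →+ (Fin n → ZMod N) where
  toFun := fun b => ∑ r, b r • G r
  map_zero' := by simp
  map_add' := by intro a b; simp [add_smul, Finset.sum_add_distrib]

lemma mem_rowspan {N n K : ℕ} (G : Fin K → Fin n → ZMod N)
    (x : Fin n → ZMod N) (hx : x ∈ AddSubgroup.closure (Set.range G)) :
    ∃ b : Fin K → ZMod N, x = ∑ r, b r • G r := by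
  have hle : AddSubgroup.closure (Set.range G) ≤ (rowspanHom G).range := by
    rw [AddSubgroup.closure_le]
    rintro y ⟨r, rfl⟩
    refine ⟨Pi.single r 1, ?_⟩
    show ∑ r', Pi.single r 1 r' • G r' = G r
    rw [Finset.sum_eq_single r]
    · simp
    · intro r' _ hne; simp [Pi.single_eq_of_ne hne]
    · simp
  obtain ⟨b, hb⟩ := hle hx
  exact ⟨b, hb.symm⟩

lemma zmod2_cases (z : ZMod 2) : z = 0 ∨ z = 1 := by revert z; decide

/-- for every vector `w` with coordinates in `{0, 2^(m-1)}` there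
is a unique codeword with coordinates in `{0, 2^(m-1)}` agreeing with `w` on the
first `K = k₁ + ⋯ + k_m` coordinates. -/
theorem unique_half_codeword {m n : ℕ} (hm : 2 ≤ m) (kv : Fin m → ℕ)
    (G : Fin (psum kv m) → Fin n → ZMod (2 ^ m)) (hSF : StandardForm kv G)
    (C : AddSubgroup (Fin n → ZMod (2 ^ m)))
    (hgen : C = AddSubgroup.closure (Set.range G))
    (w : Fin n → ZMod (2 ^ m))
    (hcoord : ∀ i, w i = 0 ∨ w i = (2 ^ (m - 1) : ZMod (2 ^ m))) :
    ∃! c : Fin n → ZMod (2 ^ m),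
      c ∈ C ∧ (∀ i, c i = 0 ∨ c i = (2 ^ (m - 1) : ZMod (2 ^ m))) ∧
      ∀ i : Fin n, (i : ℕ) < psum kv m → c i = w i := by
  have hm1 : 1 ≤ m := by omega
  have hKn : psum kv m ≤ n := hSF.1
  -- the embedding of the first K coordinates
  set e : Fin (psum kv m) → Fin n := fun r => ⟨(r : ℕ), lt_of_lt_of_le r.2 hKn⟩ with he
  -- block of each row
  choose jb hjb1 hjb2 using fun r : Fin (psum kv m) => psum_block hm1 kv (r : ℕ) r.2
  -- L3 : within columns < psum (jb r + 1), row r looks like a scaled identity row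
  have L3 : ∀ (r : Fin (psum kv m)) (c : Fin n), (c : ℕ) < psum kv ((jb r : ℕ) + 1) →
      G r c = if (r : ℕ) = (c : ℕ) then (2 ^ (jb r : ℕ) : ZMod (2^m)) else 0 := by
    intro r c hc
    have hcK : (c : ℕ) < psum kv m := lt_of_lt_of_le hc (psum_mono kv (jb r).2)
    obtain ⟨l, hl1, hl2⟩ := psum_block hm1 kv (c : ℕ) hcK
    have hlle : (l : ℕ) ≤ (jb r : ℕ) := by
      by_contra hgt
      push_neg at hgt
      have : psum kv ((jb r : ℕ) + 1) ≤ psum kv (l : ℕ) := psum_mono kv hgt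
      omega
    have H := (hSF.2 (jb r) r (hjb1 r) (hjb2 r) c).1 l hl1 hl2
    rcases lt_or_eq_of_le hlle with hlt | heq
    · have h0 : G r c = 0 := H.1 hlt
      have hrc : (r : ℕ) ≠ (c : ℕ) := by
        have : psum kv ((l : ℕ) + 1) ≤ psum kv (jb r : ℕ) := psum_mono kv hlt
        have := hjb1 r
        omega
      rw [h0, if_neg hrc]
    · exact H.2 (Fin.ext heq)
  -- L1 : rows of later blocks vanish on earlier-block columns
  have L1 : ∀ (r r' : Fin (psum kv m)), (jb r : ℕ) < (jb r' : ℕ) → G r' (e r) = 0 := by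
    intro r r' hlt
    have H := (hSF.2 (jb r') r' (hjb1 r') (hjb2 r') (e r)).1 (jb r) (hjb1 r) (hjb2 r)
    exact H.1 hlt
  -- L2 : every entry of row r is a multiple of 2 ^ (jb r)
  have L2 : ∀ (r : Fin (psum kv m)) (c : Fin n), ∃ a, G r c = 2 ^ (jb r : ℕ) * a := by
    intro r c
    by_cases hcK : (c : ℕ) < psum kv m
    · obtain ⟨l, hl1, hl2⟩ := psum_block hm1 kv (c : ℕ) hcK
      have H := hSF.2 (jb r) r (hjb1 r) (hjb2 r) c
      rcases lt_trichotomy (l : ℕ) (jb r : ℕ) with hlt | heq | hgt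
      · exact ⟨0, by rw [(H.1 l hl1 hl2).1 hlt, mul_zero]⟩
      · rw [(H.1 l hl1 hl2).2 (Fin.ext heq)]
        exact ⟨if (r : ℕ) = (c : ℕ) then 1 else 0, by split <;> simp⟩
      · exact H.2 (Or.inr ⟨l, hgt, hl1, hl2⟩)
    · exact (hSF.2 (jb r) r (hjb1 r) (hjb2 r) c).2 (Or.inl (le_of_not_gt hcK))
  -- core elimination lemma
  have LA : ∀ b : Fin (psum kv m) → ZMod (2 ^ m),
      (∀ i : Fin n, (i : ℕ) < psum kv m → (∑ r, b r * G r i) = 0) →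
      ∀ r, b r * 2 ^ (jb r : ℕ) = 0 := by
    intro b hb
    have main : ∀ t : ℕ, ∀ r : Fin (psum kv m), (r : ℕ) = t → b r * 2 ^ (jb r : ℕ) = 0 := by
      intro t
      induction t using Nat.strong_induction_on with
      | _ t IH =>
        intro r hrt
        have hsum := hb (e r) (by simpa [he] using r.2)
        have hre : (e r : ℕ) = (r : ℕ) := rfl
        have hsingle : (∑ r', b r' * G r' (e r)) = b r * G r (e r) := by
          refine Finset.sum_eq_single r ?_ (by simp)
          intro r' _ hne
          rcases lt_trichotomy (jb r' : ℕ) (jb r : ℕ) with hlt | heq | hgt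
          · -- earlier block: use IH
            have hr'r : (r' : ℕ) < (r : ℕ) := by
              have h1 := hjb2 r'
              have h2 : psum kv ((jb r' : ℕ) + 1) ≤ psum kv (jb r : ℕ) := psum_mono kv hlt
              have h3 := hjb1 r
              omega
            have hIH := IH (r' : ℕ) (by omega) r' rfl
            obtain ⟨a, ha⟩ := L2 r' (e r)
            rw [ha, ← mul_assoc, hIH, zero_mul]
          · -- same block
            have := L3 r' (e r) (by rw [hre]; rw [show ((jb r' : ℕ)) = (jb r : ℕ) from heq]; exact hjb2 r)
            rw [this, if_neg (by simpa [hre] using fun h => hne (Fin.ext h)), mul_zero]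
          · rw [L1 r r' hgt, mul_zero]
        rw [hsingle] at hsum
        rw [L3 r (e r) (by rw [hre]; exact hjb2 r), if_pos rfl] at hsum
        exact hsum
    intro r; exact main (r : ℕ) r rfl
  -- uniqueness helper: codewords vanishing on the first K coordinates vanish
  have LU : ∀ d, d ∈ C → (∀ i : Fin n, (i : ℕ) < psum kv m → d i = 0) → d = 0 := by
    intro d hd hd0
    rw [hgen] at hd
    obtain ⟨b, rfl⟩ := mem_rowspan G d hd
    have hb : ∀ i : Fin n, (i : ℕ) < psum kv m → (∑ r, b r * G r i) = 0 := by
      intro i hi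
      have := hd0 i hi
      simpa [Finset.sum_apply, smul_eq_mul] using this
    have hz := LA b hb
    funext i
    rw [Finset.sum_apply]
    rw [show (0 : Fin n → ZMod (2^m)) i = 0 from rfl]
    refine Finset.sum_eq_zero ?_
    intro r _
    obtain ⟨a, ha⟩ := L2 r i
    show b r * G r i = 0
    rw [ha, ← mul_assoc, hz r, zero_mul]
  -- auxiliary objects for existence
  set lift : ZMod 2 → ZMod (2 ^ m) := fun z => ((z.val : ℕ) : ZMod (2 ^ m)) with hlift
  set vcoef : Fin (psum kv m) → ZMod (2 ^ m) := fun r => 2 ^ (m - 1 - (jb r : ℕ)) with hvcoef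
  set Fm : (Fin (psum kv m) → ZMod 2) → (Fin n → ZMod (2 ^ m)) :=
    fun ε i => ∑ r, lift (ε r) * vcoef r * G r i with hFm
  set unhalf : ZMod (2 ^ m) → ZMod 2 := fun x => if x = 0 then 0 else 1 with hunhalf
  set g : (Fin (psum kv m) → ZMod 2) → (Fin (psum kv m) → ZMod 2) :=
    fun ε r => unhalf (Fm ε (e r)) with hg
  have hexp1 : ∀ r, (2 : ZMod (2 ^ m)) * (vcoef r * 2 ^ (jb r : ℕ)) = 0 := by
    intro r
    have h : (2 : ZMod (2 ^ m)) * (vcoef r * 2 ^ (jb r : ℕ)) = 2 ^ m := by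
      rw [hvcoef, ← pow_add, ← pow_succ']
      congr 1
      have := (jb r).2
      omega
    rw [h, pow_m_eq_zero]
  have hexp2 : ∀ r, vcoef r * 2 ^ (jb r : ℕ) = (2 : ZMod (2 ^ m)) ^ (m - 1) := by
    intro r
    rw [hvcoef, ← pow_add]
    congr 1
    have := (jb r).2
    omega
  have hterm0 : ∀ (x : ZMod (2 ^ m)) (r : Fin (psum kv m)) (i : Fin n),
      2 * (x * vcoef r * G r i) = 0 := by
    intro x r i
    obtain ⟨a, ha⟩ := L2 r i
    rw [ha]
    calc 2 * (x * vcoef r * (2 ^ (jb r : ℕ) * a))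
        = x * a * (2 * (vcoef r * 2 ^ (jb r : ℕ))) := by ring
      _ = 0 := by rw [hexp1 r, mul_zero]
  have hF2 : ∀ ε i, 2 * Fm ε i = 0 := by
    intro ε i
    rw [hFm]
    simp only
    rw [Finset.mul_sum]
    exact Finset.sum_eq_zero fun r _ => hterm0 (lift (ε r)) r i
  have hhalf : ∀ ε i, Fm ε i = 0 ∨ Fm ε i = 2 ^ (m - 1) :=
    fun ε i => (two_mul_eq_zero_iff hm1 _).mp (hF2 ε i)
  have hl0 : lift 0 = 0 := by
    rw [hlift]
    show (((0 : ZMod 2).val : ℕ) : ZMod (2 ^ m)) = 0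
    rw [show (0 : ZMod 2).val = 0 from rfl]
    exact Nat.cast_zero
  have hl1 : lift 1 = 1 := by
    rw [hlift]
    show (((1 : ZMod 2).val : ℕ) : ZMod (2 ^ m)) = 1
    rw [show (1 : ZMod 2).val = 1 from rfl]
    exact Nat.cast_one
  have hliftadd : ∀ z z' : ZMod 2,
      lift (z + z') = lift z + lift z' ∨ lift (z + z') = lift z + lift z' - 2 := by
    intro z z'
    have h11 : (1 + 1 : ZMod 2) = 0 := rfl
    rcases zmod2_cases z with rfl | rfl <;> rcases zmod2_cases z' with rfl | rfl
    · left; rw [add_zero, hl0, add_zero]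
    · left; rw [zero_add, hl0, zero_add]
    · left; rw [add_zero, hl0, add_zero]
    · right; rw [h11, hl0, hl1]; norm_num
  have hFadd : ∀ ε ε', Fm (ε + ε') = Fm ε + Fm ε' := by
    intro ε ε'
    funext i
    rw [hFm]
    simp only [Pi.add_apply]
    rw [← Finset.sum_add_distrib]
    refine Finset.sum_congr rfl ?_
    intro r _
    rcases hliftadd (ε r) (ε' r) with h | h
    · rw [h]; ring
    · rw [h]
      have hz : 2 * (vcoef r * G r i) = 0 := by
        have := hterm0 1 r i
        rwa [one_mul] at this
      linear_combination -hz
  have hone_ne : (2 : ZMod (2 ^ m)) ^ (m - 1) ≠ 0 := pow_m1_ne_zero hm1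
  have hunhalf0 : unhalf 0 = 0 := by rw [hunhalf]; simp
  have hunhalfh : unhalf ((2 : ZMod (2 ^ m)) ^ (m - 1)) = 1 := by rw [hunhalf]; simp [hone_ne]
  -- g is additive
  have hgadd : ∀ ε ε', g (ε + ε') = g ε + g ε' := by
    intro ε ε'
    funext r
    rw [hg]
    simp only [Pi.add_apply]
    rw [hFadd]
    simp only [Pi.add_apply]
    rcases hhalf ε (e r) with hx | hx <;> rcases hhalf ε' (e r) with hy | hy <;>
      rw [hx, hy]
    · rw [add_zero, hunhalf0, add_zero]
    · rw [zero_add, hunhalf0, zero_add]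
    · rw [add_zero, hunhalf0, add_zero]
    · have h2 : (2 : ZMod (2 ^ m)) ^ (m - 1) + 2 ^ (m - 1) = 0 := by
        have := (two_mul_eq_zero_iff hm1 ((2 : ZMod (2 ^ m)) ^ (m - 1))).mpr (Or.inr rfl)
        linear_combination this
      rw [h2, hunhalf0, hunhalfh]
      rfl
  -- g ε = 0 implies ε = 0
  have hginj0 : ∀ ε, g ε = 0 → ε = 0 := by
    intro ε hg0
    have hb : ∀ i : Fin n, (i : ℕ) < psum kv m →
        (∑ r, (lift (ε r) * vcoef r) * G r i) = 0 := by
      intro i hi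
      have hr0 : e ⟨(i : ℕ), hi⟩ = i := by rw [he]
      have h1 : g ε ⟨(i : ℕ), hi⟩ = 0 := by rw [hg0]; rfl
      rw [hg, hunhalf] at h1
      simp only [hr0] at h1
      by_cases h2 : Fm ε i = 0
      · rw [hFm] at h2; exact h2
      · rw [if_neg h2] at h1
        exact absurd h1 (by decide)
    have hz := LA (fun r => lift (ε r) * vcoef r) hb
    funext r
    have h3 := hz r
    rw [mul_assoc, hexp2 r] at h3
    rcases zmod2_cases (ε r) with h4 | h4
    · rw [h4]; rfl
    · exfalso
      rw [h4, hl1, one_mul] at h3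
      exact hone_ne h3
  have hginj : Function.Injective g := by
    intro ε ε' hgg
    have hsum : g (ε + ε') = 0 := by
      rw [hgadd, hgg]
      funext r
      have : ∀ a : ZMod 2, a + a = 0 := by decide
      exact this _
    have h0 := hginj0 _ hsum
    funext r
    have h1 : ε r + ε' r = 0 := congrFun h0 r
    have : ∀ a b : ZMod 2, a + b = 0 → a = b := by decide
    exact this _ _ h1
  have hgsurj : Function.Surjective g := Finite.injective_iff_surjective.mp hginj
  obtain ⟨ε, hε⟩ := hgsurj (fun r => unhalf (w (e r)))
  -- the codeword
  have hmem : Fm ε ∈ C := by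
    rw [hgen]
    have hrw : Fm ε = ∑ r, ((lift (ε r) * vcoef r)) • G r := by
      funext i
      rw [hFm, Finset.sum_apply]
      refine Finset.sum_congr rfl ?_
      intro r _
      rw [Pi.smul_apply, smul_eq_mul, mul_assoc]
    rw [hrw]
    refine AddSubgroup.sum_mem _ ?_
    intro r _
    have hnat : lift (ε r) * vcoef r = (((ε r).val * 2 ^ (m - 1 - (jb r : ℕ)) : ℕ) : ZMod (2 ^ m)) := by
      rw [hlift, hvcoef]
      push_cast
      ring
    rw [hnat, Nat.cast_smul_eq_nsmul]
    exact AddSubgroup.nsmul_mem _ (AddSubgroup.subset_closure (Set.mem_range_self r)) _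
  have hagree : ∀ i : Fin n, (i : ℕ) < psum kv m → Fm ε i = w i := by
    intro i hi
    have hr0 : e ⟨(i : ℕ), hi⟩ = i := by rw [he]
    have h1 : g ε ⟨(i : ℕ), hi⟩ = unhalf (w (e ⟨(i : ℕ), hi⟩)) := congrFun hε _
    rw [hg] at h1
    simp only [hr0] at h1
    rcases hhalf ε i with hx | hx <;> rcases hcoord i with hy | hy
    · rw [hx, hy]
    · exfalso
      rw [hx, hy, hunhalf0, hunhalfh] at h1
      exact absurd h1 (by decide)
    · exfalso
      rw [hx, hy, hunhalfh, hunhalf0] at h1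
      exact absurd h1 (by decide)
    · rw [hx, hy]
  refine ⟨Fm ε, ⟨hmem, fun i => hhalf ε i, hagree⟩, ?_⟩
  rintro y ⟨hyC, _, hyw⟩
  have hd := LU (y - Fm ε) (C.sub_mem hyC hmem) ?_
  · have := sub_eq_zero.mp hd
    exact this
  · intro i hi
    rw [Pi.sub_apply, hyw i hi, hagree i hi, sub_self]
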